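/- arXiv:2511.10117 — 2 statements merged into one kernel-verified Lean document; each statement's English description precedes it below -/
import Mathlib

section
/- Suppose ζ : ℝ≥0 → ℝ is given by ζ(t) = ζ₀·exp(-∫₀ᵗ b) + c·∫₀ᵗ exp(-∫ₛᵗ b)·b(s)·τ(s) ds, where b : ℝ≥0 → ℝ is nonnegative and locally integrable, and |τ(s)| ≤ T for all s. Then |ζ(t)| ≤ |ζ₀|·exp(-∫₀ᵗ b) + |c|·T·(1 - exp(-∫₀ᵗ b)) for all t ≥ 0. -/
open MeasureTheory Set intervalIntegral

lemma key_exp_primitive_bound (t : ℝ) (b : ℝ → ℝ) (ht : 0 ≤ t) (hb : ∀ s, 0 ≤ b s)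
    (hbi : MeasureTheory.Integrable b) :
    (∫ s in (0:ℝ)..t, Real.exp (∫ ξ in (0:ℝ)..s, b ξ) * b s) ≤
      Real.exp (∫ ξ in (0:ℝ)..t, b ξ) - 1 := by
  set B : ℝ → ℝ := fun s => ∫ ξ in (0:ℝ)..s, b ξ with hBdef
  have hint : ∀ a c : ℝ, IntervalIntegrable b volume a c := fun a c => hbi.intervalIntegrable
  have hBc : Continuous B := intervalIntegral.continuous_primitive hint 0
  have hBmono : Monotone B := by
    intro x y hxy
    have h1 : B y - B x = ∫ ξ in x..y, b ξ :=
      integral_interval_sub_left (hint 0 y) (hint 0 x)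
    nlinarith [intervalIntegral.integral_nonneg (μ := volume) hxy (fun u _ => hb u)]
  set SB : StieltjesFunction ℝ := ⟨B, hBmono, fun x => (hBc.continuousAt).continuousWithinAt⟩
    with hSB
  have hmeasB : SB.measure = volume.withDensity (fun x => ENNReal.ofReal (b x)) := by
    refine Measure.ext_of_Ioc _ _ (fun a c hac => ?_)
    rw [SB.measure_Ioc, withDensity_apply _ measurableSet_Ioc]
    have h1 : SB c - SB a = ∫ ξ in a..c, b ξ :=
      integral_interval_sub_left (hint 0 c) (hint 0 a)
    rw [show (SB c : ℝ) - SB a = ∫ ξ in a..c, b ξ from h1,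
      intervalIntegral.integral_of_le hac.le,
      ofReal_integral_eq_lintegral_ofReal (hbi.integrableOn)
        (Filter.Eventually.of_forall (fun x => hb x))]
  have hrnB : (SB.measure.rnDeriv volume) =ᵐ[volume] fun x => ENNReal.ofReal (b x) := by
    rw [hmeasB]
    exact Measure.rnDeriv_withDensity₀ volume
      (hbi.aemeasurable.ennreal_ofReal)
  have hBderiv : ∀ᵐ x ∂(volume : Measure ℝ), HasDerivAt B (b x) x := by
    filter_upwards [SB.ae_hasDerivAt, hrnB] with x hx hx2
    rw [hx2, ENNReal.toReal_ofReal (hb x)] at hx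
    exact hx
  set G : ℝ → ℝ := fun s => Real.exp (B s) with hGdef
  have hGc : Continuous G := Real.continuous_exp.comp hBc
  have hGmono : Monotone G := fun x y h => Real.exp_le_exp.2 (hBmono h)
  set SG : StieltjesFunction ℝ := ⟨G, hGmono, fun x => (hGc.continuousAt).continuousWithinAt⟩
    with hSG
  have hrnG : ∀ᵐ x ∂(volume : Measure ℝ),
      SG.measure.rnDeriv volume x = ENNReal.ofReal (Real.exp (B x) * b x) := by
    filter_upwards [hBderiv, SG.ae_hasDerivAt, Measure.rnDeriv_lt_top SG.measure volume]
      with x h1 h2 h3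
    have h4 : HasDerivAt G (Real.exp (B x) * b x) x := h1.exp
    have h5 : (SG.measure.rnDeriv volume x).toReal = Real.exp (B x) * b x :=
      h2.unique h4
    rw [← h5, ENNReal.ofReal_toReal h3.ne]
  -- main computation
  have hnn : ∀ x, 0 ≤ Real.exp (B x) * b x := fun x =>
    mul_nonneg (Real.exp_pos _).le (hb x)
  have hms : AEStronglyMeasurable (fun s => Real.exp (B s) * b s)
      (volume.restrict (Ioc (0:ℝ) t)) :=
    (hGc.aestronglyMeasurable.restrict).mul hbi.aestronglyMeasurable.restrict
  rw [intervalIntegral.integral_of_le ht,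
    integral_eq_lintegral_of_nonneg_ae
      (Filter.Eventually.of_forall (fun x => hnn x)) hms]
  have hle : (∫⁻ x in Ioc (0:ℝ) t, ENNReal.ofReal (Real.exp (B x) * b x)) ≤
      ENNReal.ofReal (Real.exp (B t) - 1) := by
    have e1 : (∫⁻ x in Ioc (0:ℝ) t, ENNReal.ofReal (Real.exp (B x) * b x)) =
        ∫⁻ x in Ioc (0:ℝ) t, SG.measure.rnDeriv volume x := by
      refine lintegral_congr_ae ?_
      filter_upwards [ae_restrict_of_ae hrnG] with x hx
      rw [hx]
    rw [e1]
    have e2 : (∫⁻ x in Ioc (0:ℝ) t, SG.measure.rnDeriv volume x) =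
        (volume.withDensity (SG.measure.rnDeriv volume)) (Ioc 0 t) :=
      (withDensity_apply _ measurableSet_Ioc).symm
    rw [e2]
    have e3 := (Measure.withDensity_rnDeriv_le SG.measure volume) (Ioc 0 t)
    refine e3.trans_eq ?_
    rw [SG.measure_Ioc]
    have : (SG 0 : ℝ) = 1 := by
      show Real.exp (B 0) = 1
      simp [hBdef]
    rw [show (SG t : ℝ) - SG 0 = Real.exp (B t) - 1 by rw [this]]
  have h1t : (1:ℝ) ≤ Real.exp (B t) :=
    Real.one_le_exp (intervalIntegral.integral_nonneg (μ := volume) ht (fun u _ => hb u))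
  calc (∫⁻ x in Ioc (0:ℝ) t, ENNReal.ofReal (Real.exp (B x) * b x)).toReal
      ≤ (ENNReal.ofReal (Real.exp (B t) - 1)).toReal :=
        ENNReal.toReal_mono ENNReal.ofReal_ne_top hle
    _ = Real.exp (B t) - 1 := ENNReal.toReal_ofReal (by linarith)

theorem variation_of_constants_bound
    (ζ0 c T : ℝ) (b τ ζ : ℝ → ℝ)
    (hb : ∀ t, 0 ≤ t → 0 ≤ b t)
    (hloc : MeasureTheory.LocallyIntegrableOn b (Set.Ici 0))
    (hτ : ∀ s, 0 ≤ s → |τ s| ≤ T)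
    (hζ : ∀ t, 0 ≤ t →
      ζ t = ζ0 * Real.exp (-(∫ ξ in (0:ℝ)..t, b ξ)) +
        c * ∫ s in (0:ℝ)..t, Real.exp (-(∫ ξ in s..t, b ξ)) * b s * τ s) :
    ∀ t, 0 ≤ t →
      |ζ t| ≤ |ζ0| * Real.exp (-(∫ ξ in (0:ℝ)..t, b ξ)) +
        |c| * T * (1 - Real.exp (-(∫ ξ in (0:ℝ)..t, b ξ))) := by
  intro t ht
  have hbint : IntegrableOn b (Icc 0 t) volume :=
    hloc.integrableOn_compact_subset (fun x hx => hx.1) isCompact_Icc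
  set Bt : ℝ := ∫ ξ in (0:ℝ)..t, b ξ with hBt
  have hBt0 : 0 ≤ Bt :=
    intervalIntegral.integral_nonneg (μ := volume) ht (fun u hu => hb u hu.1)
  have hexp1 : Real.exp (-Bt) ≤ 1 := Real.exp_le_one_iff.2 (by linarith)
  have hT0 : 0 ≤ T := le_trans (abs_nonneg _) (hτ 0 le_rfl)
  have hsecond_nn : 0 ≤ |c| * T * (1 - Real.exp (-Bt)) :=
    mul_nonneg (mul_nonneg (abs_nonneg c) hT0) (by linarith)
  rw [hζ t ht]
  by_cases hfi : IntervalIntegrable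
      (fun s => Real.exp (-(∫ ξ in s..t, b ξ)) * b s * τ s) volume 0 t
  swap
  · rw [intervalIntegral.integral_undef hfi, mul_zero, add_zero, abs_mul,
      abs_of_pos (Real.exp_pos _)]
    linarith
  -- integrable case
  set bt : ℝ → ℝ := (Set.Icc (0:ℝ) t).indicator b with hbtdef
  have hbti : Integrable bt volume := (integrable_indicator_iff measurableSet_Icc).2 hbint
  have hbtnn : ∀ s, 0 ≤ bt s := fun s =>
    Set.indicator_nonneg (fun u hu => hb u hu.1) s
  have hEq : ∀ s ∈ Icc (0:ℝ) t, (∫ ξ in (0:ℝ)..s, bt ξ) = ∫ ξ in (0:ℝ)..s, b ξ := by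
    intro s hs
    refine intervalIntegral.integral_congr (fun u hu => ?_)
    rw [Set.uIcc_of_le hs.1] at hu
    exact Set.indicator_of_mem (Set.mem_Icc.mpr ⟨(Set.mem_Icc.mp hu).1, (Set.mem_Icc.mp hu).2.trans hs.2⟩) b
  have hBtbt : (∫ ξ in (0:ℝ)..t, bt ξ) = Bt := hEq t ⟨ht, le_rfl⟩
  have key := key_exp_primitive_bound t bt ht hbtnn hbti
  rw [hBtbt] at key
  set g : ℝ → ℝ := fun s =>
    Real.exp (∫ ξ in (0:ℝ)..s, bt ξ) * bt s * (T * Real.exp (-Bt)) with hgdef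
  have hcont : ContinuousOn (fun s => Real.exp (∫ ξ in (0:ℝ)..s, bt ξ)) (Set.uIcc 0 t) :=
    (Real.continuous_exp.comp
      (intervalIntegral.continuous_primitive (fun a c => hbti.intervalIntegrable) 0)).continuousOn
  have hgi : IntervalIntegrable g volume 0 t :=
    (IntervalIntegrable.continuousOn_mul hbti.intervalIntegrable hcont).mul_const _
  have hb0t : IntervalIntegrable b volume 0 t :=
    (intervalIntegrable_iff_integrableOn_Icc_of_le ht).2 hbint
  have habs : |∫ s in (0:ℝ)..t, Real.exp (-(∫ ξ in s..t, b ξ)) * b s * τ s|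
      ≤ ∫ s in (0:ℝ)..t, |Real.exp (-(∫ ξ in s..t, b ξ)) * b s * τ s| :=
    intervalIntegral.abs_integral_le_integral_abs ht
  have hmono : (∫ s in (0:ℝ)..t, |Real.exp (-(∫ ξ in s..t, b ξ)) * b s * τ s|)
      ≤ ∫ s in (0:ℝ)..t, g s := by
    refine intervalIntegral.integral_mono_on ht hfi.abs hgi (fun s hs => ?_)
    have hb0s : IntervalIntegrable b volume 0 s :=
      (intervalIntegrable_iff_integrableOn_Icc_of_le hs.1).2
        (hbint.mono_set (Icc_subset_Icc_right hs.2))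
    have hsplit : (∫ ξ in s..t, b ξ) = Bt - ∫ ξ in (0:ℝ)..s, b ξ :=
      (intervalIntegral.integral_interval_sub_left hb0t hb0s).symm
    have hbs : b s = bt s := (Set.indicator_of_mem hs b).symm
    have hBs : (∫ ξ in (0:ℝ)..s, b ξ) = ∫ ξ in (0:ℝ)..s, bt ξ := (hEq s hs).symm
    rw [abs_mul, abs_mul, abs_of_pos (Real.exp_pos _), abs_of_nonneg (hb s hs.1),
      hsplit, hgdef]
    have hexp : Real.exp (-(Bt - ∫ ξ in (0:ℝ)..s, b ξ)) =
        Real.exp (∫ ξ in (0:ℝ)..s, bt ξ) * Real.exp (-Bt) := by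
      rw [← Real.exp_add, hBs]; ring_nf
    rw [hexp, hbs]
    have := hτ s hs.1
    have h1 : 0 ≤ Real.exp (∫ ξ in (0:ℝ)..s, bt ξ) * Real.exp (-Bt) * bt s := mul_nonneg (by positivity) (hbtnn s)
    calc Real.exp (∫ ξ in (0:ℝ)..s, bt ξ) * Real.exp (-Bt) * bt s * |τ s|
        ≤ Real.exp (∫ ξ in (0:ℝ)..s, bt ξ) * Real.exp (-Bt) * bt s * T :=
          mul_le_mul_of_nonneg_left this h1
      _ = Real.exp (∫ ξ in (0:ℝ)..s, bt ξ) * bt s * (T * Real.exp (-Bt)) := by ring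
  have hgint : (∫ s in (0:ℝ)..t, g s) ≤ T * (1 - Real.exp (-Bt)) := by
    rw [hgdef]
    rw [intervalIntegral.integral_mul_const]
    have h2 : (0:ℝ) ≤ T * Real.exp (-Bt) := by positivity
    calc (∫ s in (0:ℝ)..t, Real.exp (∫ ξ in (0:ℝ)..s, bt ξ) * bt s) * (T * Real.exp (-Bt))
        ≤ (Real.exp Bt - 1) * (T * Real.exp (-Bt)) := mul_le_mul_of_nonneg_right key h2
      _ = T * (Real.exp Bt * Real.exp (-Bt) - Real.exp (-Bt)) := by ring
      _ = T * (1 - Real.exp (-Bt)) := by rw [← Real.exp_add]; simp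
  calc |ζ0 * Real.exp (-Bt) + c * ∫ s in (0:ℝ)..t,
        Real.exp (-(∫ ξ in s..t, b ξ)) * b s * τ s|
      ≤ |ζ0 * Real.exp (-Bt)| + |c * ∫ s in (0:ℝ)..t,
        Real.exp (-(∫ ξ in s..t, b ξ)) * b s * τ s| := abs_add_le _ _
    _ ≤ |ζ0| * Real.exp (-Bt) + |c| * (T * (1 - Real.exp (-Bt))) := by
        rw [abs_mul, abs_mul, abs_of_pos (Real.exp_pos (-Bt))]
        have := habs.trans hmono |>.trans hgint
        have habs0 : |∫ s in (0:ℝ)..t, Real.exp (-(∫ ξ in s..t, b ξ)) * b s * τ s|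
            ≤ T * (1 - Real.exp (-Bt)) := le_trans (le_trans habs hmono) hgint
        nlinarith [abs_nonneg c, abs_nonneg (∫ s in (0:ℝ)..t,
          Real.exp (-(∫ ξ in s..t, b ξ)) * b s * τ s)]
    _ = |ζ0| * Real.exp (-Bt) + |c| * T * (1 - Real.exp (-Bt)) := by ring
end

section
/- Let K = diag(k₁,k₂) with k₁,k₂ > 0 and define V(ζ) = ½ ζᵀ K⁻¹ ζ on ℝ². Along trajectories of ζ' = -K·S·gᵀ·W·(τ̄ + g·S·ζ), where g = [[1,1],[0,-1],[-1,0]], W = diag(w₁,w₂,w₃) with wᵢ > 0, and S = diag(σ₁,σ₂) with σᵢ ∈ {0,1}, the derivative satisfies V'(ζ) = -(Sζ)ᵀ (gᵀ W g)(Sζ) - (Sζ)ᵀ gᵀ W τ̄ ≤ -α‖Sζ‖² + β‖Sζ‖, where α = λ_min(gᵀWg) > 0 and β = ‖gᵀW‖·‖τ̄‖. -/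
open Matrix
open scoped Matrix.Norms.L2Operator

noncomputable def gMat : Matrix (Fin 3) (Fin 2) ℝ := !![1, 1; 0, -1; -1, 0]

-- helper 1: quadratic form lower bound by min eigenvalue (2x2)
lemma quad_lower (A : Matrix (Fin 2) (Fin 2) ℝ) (hA : A.IsHermitian) (x : Fin 2 → ℝ) :
    min (hA.eigenvalues 0) (hA.eigenvalues 1) * (x ⬝ᵥ x) ≤ x ⬝ᵥ A.mulVec x := by
  set U : Matrix (Fin 2) (Fin 2) ℝ := (hA.eigenvectorUnitary : Matrix (Fin 2) (Fin 2) ℝ) with hUdef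
  have hU : U * star U = 1 := Matrix.mem_unitaryGroup_iff.mp hA.eigenvectorUnitary.2
  set y : Fin 2 → ℝ := star U *ᵥ x with hy
  have hstar : (star U : Matrix (Fin 2) (Fin 2) ℝ) = Uᵀ := by
    ext i j; simp [Matrix.star_apply]
  have hAx : x ⬝ᵥ A.mulVec x
      = y ⬝ᵥ (diagonal (RCLike.ofReal ∘ hA.eigenvalues)).mulVec y := by
    conv_lhs => rw [hA.spectral_theorem]
    rw [Unitary.conjStarAlgAut_apply, ← hUdef, ← Matrix.mulVec_mulVec, ← Matrix.mulVec_mulVec, Matrix.dotProduct_mulVec x U,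
      ← Matrix.mulVec_transpose, ← hstar, ← hy]
  have hxx : x ⬝ᵥ x = y ⬝ᵥ y := by
    have : y ⬝ᵥ y = (U *ᵥ y) ⬝ᵥ x := by
      rw [hy, Matrix.dotProduct_mulVec y (star U) x, ← Matrix.mulVec_transpose]
      rfl
    rw [this, hy, Matrix.mulVec_mulVec, hU, Matrix.one_mulVec, dotProduct_comm]
  rw [hAx, hxx]
  have h0 : min (hA.eigenvalues 0) (hA.eigenvalues 1) ≤ hA.eigenvalues 0 := min_le_left _ _
  have h1 : min (hA.eigenvalues 0) (hA.eigenvalues 1) ≤ hA.eigenvalues 1 := min_le_right _ _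
  simp only [dotProduct, Matrix.mulVec_diagonal, Fin.sum_univ_two, Function.comp,
    RCLike.ofReal_real_eq_id, id_eq]
  nlinarith [sq_nonneg (y 0), sq_nonneg (y 1)]

lemma dot_eq_inner (n : ℕ) (x v : Fin n → ℝ) :
    x ⬝ᵥ v = (inner ℝ ((WithLp.equiv 2 (Fin n → ℝ)).symm x) ((WithLp.equiv 2 (Fin n → ℝ)).symm v) : ℝ) := by
  show x ⬝ᵥ v = v ⬝ᵥ star x
  rw [star_trivial, dotProduct_comm]

lemma norm_sq_eq (n : ℕ) (x : Fin n → ℝ) :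
    ‖(WithLp.equiv 2 (Fin n → ℝ)).symm x‖ ^ 2 = x ⬝ᵥ x := by
  rw [dot_eq_inner, real_inner_self_eq_norm_sq]

lemma neg_dot_le (n : ℕ) (x v : Fin n → ℝ) :
    -(x ⬝ᵥ v) ≤ ‖(WithLp.equiv 2 (Fin n → ℝ)).symm v‖ * ‖(WithLp.equiv 2 (Fin n → ℝ)).symm x‖ := by
  have h := abs_real_inner_le_norm ((WithLp.equiv 2 (Fin n → ℝ)).symm x)
    ((WithLp.equiv 2 (Fin n → ℝ)).symm v)
  rw [← dot_eq_inner] at h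
  have := neg_abs_le (x ⬝ᵥ v)
  calc -(x ⬝ᵥ v) ≤ |x ⬝ᵥ v| := by linarith [abs_nonneg (x ⬝ᵥ v)]
  _ ≤ _ := by linarith [mul_comm ‖(WithLp.equiv 2 (Fin n → ℝ)).symm x‖ ‖(WithLp.equiv 2 (Fin n → ℝ)).symm v‖, h]

lemma gMat_inj (x : Fin 2 → ℝ) (h : gMat *ᵥ x = 0) : x = 0 := by
  have h1 := congrFun h 1
  have h2 := congrFun h 2
  simp [gMat, Matrix.mulVec, dotProduct, Fin.sum_univ_two] at h1 h2
  funext i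
  fin_cases i <;> simp [h1, h2] <;> linarith

lemma M_posDef (w : Fin 3 → ℝ) (hw : ∀ i, 0 < w i) :
    (gMat.transpose * Matrix.diagonal w * gMat).PosDef := by
  have hWpd : (Matrix.diagonal w).PosDef := Matrix.PosDef.diagonal hw
  refine Matrix.PosDef.of_dotProduct_mulVec_pos ?_ ?_
  · have : gMat.transpose = gMat.conjTranspose := by
      ext i j; simp [Matrix.conjTranspose_apply]
    rw [this]
    exact Matrix.isHermitian_conjTranspose_mul_mul _ hWpd.1
  · intro x hx
    have hgx : gMat *ᵥ x ≠ 0 := fun hc => hx (gMat_inj x hc)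
    have := hWpd.dotProduct_mulVec_pos hgx
    simpa [star_trivial, Matrix.dotProduct_mulVec, Matrix.vecMul_transpose,
      ← Matrix.mulVec_mulVec, Matrix.dotProduct_mulVec x gMat.transpose,
      Matrix.vecMul_transpose] using this

theorem lyapunov_dissipation
    (k : Fin 2 → ℝ) (w : Fin 3 → ℝ)
    (hk : ∀ i, 0 < k i) (hw : ∀ i, 0 < w i)
    (σ : Fin 2 → ℝ) (hσ : ∀ i, σ i = 0 ∨ σ i = 1)
    (K : Matrix (Fin 2) (Fin 2) ℝ) (hK : K = Matrix.diagonal k)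
    (W : Matrix (Fin 3) (Fin 3) ℝ) (hW : W = Matrix.diagonal w)
    (S : Matrix (Fin 2) (Fin 2) ℝ) (hS : S = Matrix.diagonal σ)
    (τbar : Fin 3 → ℝ)
    (ζ : ℝ → (Fin 2 → ℝ))
    (hζ : ∀ t, HasDerivAt ζ
      (-(K.mulVec (S.mulVec (gMat.transpose.mulVec
        (W.mulVec (τbar + gMat.mulVec (S.mulVec (ζ t)))))))) t)
    (hM : (gMat.transpose * W * gMat).IsHermitian)
    (α β : ℝ)
    (hα : α = min (hM.eigenvalues 0) (hM.eigenvalues 1))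
    (hβ : β = ‖gMat.transpose * W‖ * ‖(WithLp.equiv 2 (Fin 3 → ℝ)).symm τbar‖) :
    0 < α ∧
    ∀ t : ℝ,
      HasDerivAt (fun s => (1 / 2) * (ζ s ⬝ᵥ K⁻¹.mulVec (ζ s)))
        (-(S.mulVec (ζ t) ⬝ᵥ (gMat.transpose * W * gMat).mulVec (S.mulVec (ζ t)))
          - S.mulVec (ζ t) ⬝ᵥ (gMat.transpose * W).mulVec τbar) t ∧
      (-(S.mulVec (ζ t) ⬝ᵥ (gMat.transpose * W * gMat).mulVec (S.mulVec (ζ t)))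
          - S.mulVec (ζ t) ⬝ᵥ (gMat.transpose * W).mulVec τbar) ≤
        -α * ‖(WithLp.equiv 2 (Fin 2 → ℝ)).symm (S.mulVec (ζ t))‖ ^ 2 +
          β * ‖(WithLp.equiv 2 (Fin 2 → ℝ)).symm (S.mulVec (ζ t))‖ := by
  subst hK hW hS hα hβ
  have hMpd : (gMat.transpose * Matrix.diagonal w * gMat).PosDef := M_posDef w hw
  have hαpos : 0 < min (hM.eigenvalues 0) (hM.eigenvalues 1) :=
    lt_min (hMpd.eigenvalues_pos 0) (hMpd.eigenvalues_pos 1)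
  refine ⟨hαpos, fun t => ?_⟩
  set x : Fin 2 → ℝ := Matrix.diagonal σ *ᵥ ζ t with hx
  constructor
  · -- derivative
    set d : Fin 2 → ℝ := -(Matrix.diagonal k *ᵥ (Matrix.diagonal σ *ᵥ (gMat.transpose *ᵥ
        (Matrix.diagonal w *ᵥ (τbar + gMat *ᵥ (Matrix.diagonal σ *ᵥ ζ t)))))) with hd
    have h0 : HasDerivAt (fun s => ζ s 0) (d 0) t := hasDerivAt_pi.mp (hζ t) 0
    have h1 : HasDerivAt (fun s => ζ s 1) (d 1) t := hasDerivAt_pi.mp (hζ t) 1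
    have hKinv : (Matrix.diagonal k)⁻¹ = Matrix.diagonal (fun i => (k i)⁻¹) := by
      apply Matrix.inv_eq_right_inv
      rw [Matrix.diagonal_mul_diagonal]
      convert Matrix.diagonal_one using 2
      exact funext fun i => mul_inv_cancel₀ (hk i).ne'
    have hfun : (fun s => (1 / 2 : ℝ) * (ζ s ⬝ᵥ (Matrix.diagonal k)⁻¹.mulVec (ζ s)))
        = fun s => (1 / 2 : ℝ) * (ζ s 0 * ((k 0)⁻¹ * ζ s 0) + ζ s 1 * ((k 1)⁻¹ * ζ s 1)) := by
      funext s
      rw [hKinv]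
      simp [dotProduct, Matrix.mulVec_diagonal, Fin.sum_univ_two]
    rw [hfun]
    have hD : HasDerivAt
        (fun s => (1 / 2 : ℝ) * (ζ s 0 * ((k 0)⁻¹ * ζ s 0) + ζ s 1 * ((k 1)⁻¹ * ζ s 1)))
        ((1 / 2 : ℝ) * ((d 0 * ((k 0)⁻¹ * ζ t 0) + ζ t 0 * ((k 0)⁻¹ * d 0))
          + (d 1 * ((k 1)⁻¹ * ζ t 1) + ζ t 1 * ((k 1)⁻¹ * d 1)))) t :=
      (((h0.mul (h0.const_mul _)).add (h1.mul (h1.const_mul _)))).const_mul _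
    convert hD using 1
    have hk0 := (hk 0).ne'
    have hk1 := (hk 1).ne'
    simp only [hd, hx, gMat, Matrix.mulVec, dotProduct, Matrix.mul_apply,
      Fin.sum_univ_two, Fin.sum_univ_three, Matrix.diagonal_apply, Matrix.transpose_apply,
      Pi.add_apply, Pi.neg_apply, Matrix.cons_val', Matrix.cons_val_zero, Matrix.cons_val_one,
      Matrix.head_cons, Matrix.empty_val', Matrix.cons_val_fin_one, Matrix.head_fin_const,
      Matrix.of_apply]
    norm_num [Fin.ext_iff, Matrix.cons_val_two, Matrix.tail_cons]
    field_simp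
    ring
  · -- inequality
    have hquad := quad_lower _ hM x
    have hnorm : ‖(WithLp.equiv 2 (Fin 2 → ℝ)).symm x‖ ^ 2 = x ⬝ᵥ x := norm_sq_eq 2 x
    have hb1 : -(x ⬝ᵥ (gMat.transpose * Matrix.diagonal w * gMat).mulVec x)
        ≤ -(min (hM.eigenvalues 0) (hM.eigenvalues 1))
            * ‖(WithLp.equiv 2 (Fin 2 → ℝ)).symm x‖ ^ 2 := by
      rw [hnorm]; linarith
    have hcs := neg_dot_le 2 x ((gMat.transpose * Matrix.diagonal w).mulVec τbar)
    have hop : ‖(WithLp.equiv 2 (Fin 2 → ℝ)).symm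
          ((gMat.transpose * Matrix.diagonal w).mulVec τbar)‖
        ≤ ‖gMat.transpose * Matrix.diagonal w‖ * ‖(WithLp.equiv 2 (Fin 3 → ℝ)).symm τbar‖ :=
      Matrix.l2_opNorm_mulVec (gMat.transpose * Matrix.diagonal w)
        ((WithLp.equiv 2 (Fin 3 → ℝ)).symm τbar)
    have hxnn : 0 ≤ ‖(WithLp.equiv 2 (Fin 2 → ℝ)).symm x‖ := norm_nonneg _
    nlinarith [hcs, hop, hxnn, hb1]
end
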